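/- Let p ≥ 2 and let G be a connected 2p-regular graph. Then G is locally linear (every edge lies in exactly one triangle) if and only if G contains no diamond (K_4 minus an edge) as an induced subgraph, no K_4, and no induced K_{1,p+1}. -/

import Mathlib

open SimpleGraph

/-- The diamond graph: `K_4` minus the edge between vertices `2` and `3`. -/
def Diamond : SimpleGraph (Fin 4) :=
  SimpleGraph.fromRel (fun a b => ¬((a = 2 ∧ b = 3) ∨ (a = 3 ∧ b = 2)))

lemma diamond_adj (a b : Fin 4) :
    Diamond.Adj a b ↔ a ≠ b ∧ ¬((a = 2 ∧ b = 3) ∨ (a = 3 ∧ b = 2)) := by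
  simp only [Diamond, SimpleGraph.fromRel_adj]
  constructor
  · rintro ⟨h, h2 | h2⟩ <;> exact ⟨h, by tauto⟩
  · rintro ⟨h, h2⟩; exact ⟨h, Or.inl h2⟩

lemma diamond_embed {V : Type*} (G : SimpleGraph V) {u v w1 w2 : V}
    (huv : G.Adj u v) (h1 : G.Adj u w1) (h2 : G.Adj u w2)
    (h3 : G.Adj v w1) (h4 : G.Adj v w2) (h5 : ¬ G.Adj w1 w2) (hne : w1 ≠ w2) :
    Nonempty (Diamond ↪g G) := by
  have h5' : ¬ G.Adj w2 w1 := fun h => h5 h.symm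
  have e1 := huv.ne; have e2 := h1.ne; have e3 := h2.ne
  have e4 := h3.ne; have e5 := h4.ne
  refine ⟨⟨⟨![u, v, w1, w2], ?_⟩, ?_⟩⟩
  · intro a b
    fin_cases a <;> fin_cases b <;>
      simp [e1, e2, e3, e4, e5, hne, e1.symm, e2.symm, e3.symm, e4.symm, e5.symm, hne.symm]
  · intro a b
    show G.Adj (![u, v, w1, w2] a) (![u, v, w1, w2] b) ↔ _
    fin_cases a <;> fin_cases b <;>
      simp [diamond_adj, huv, h1, h2, h3, h4, h5, h5', huv.symm, h1.symm, h2.symm, h3.symm,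
        h4.symm, G.irrefl]

lemma k4_embed {V : Type*} (G : SimpleGraph V) {u a b c : V}
    (h1 : G.Adj u a) (h2 : G.Adj u b) (h3 : G.Adj u c)
    (h4 : G.Adj a b) (h5 : G.Adj a c) (h6 : G.Adj b c) :
    ¬ G.CliqueFree 4 := by
  rw [SimpleGraph.not_cliqueFree_iff]
  refine ⟨⟨⟨![u, a, b, c], ?_⟩, ?_⟩⟩
  · intro x y
    fin_cases x <;> fin_cases y <;>
      simp [h1, h2, h3, h4, h5, h6, h1.symm, h2.symm, h3.symm, h4.symm, h5.symm, h6.symm,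
        G.irrefl]
  · intro x y
    fin_cases x <;> fin_cases y <;>
      simp [h1.ne, h2.ne, h3.ne, h4.ne, h5.ne, h6.ne, h1.ne.symm, h2.ne.symm, h3.ne.symm,
        h4.ne.symm, h5.ne.symm, h6.ne.symm]

lemma matching_unique {V : Type*} (G : SimpleGraph V) (hd : ¬ Nonempty (Diamond ↪g G))
    (hk : G.CliqueFree 4) {u a b c : V} (hua : G.Adj u a) (hub : G.Adj u b) (huc : G.Adj u c)
    (hab : G.Adj a b) (hac : G.Adj a c) : b = c := by
  by_contra hbc
  by_cases hadj : G.Adj b c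
  · exact k4_embed G hua hub huc hab hac hadj hk
  · exact hd (diamond_embed G hua hub huc hab hac hadj hbc)

lemma fwd_no_diamond {V : Type*} (G : SimpleGraph V)
    (h : ∀ u v : V, G.Adj u v → ∃! w, G.Adj u w ∧ G.Adj v w) :
    ¬ Nonempty (Diamond ↪g G) := by
  rintro ⟨f⟩
  obtain ⟨w, _, huniq⟩ := h (f 0) (f 1) (f.map_rel_iff.2 (by rw [diamond_adj]; decide))
  have h2 := huniq (f 2) ⟨f.map_rel_iff.2 (by rw [diamond_adj]; decide),
    f.map_rel_iff.2 (by rw [diamond_adj]; decide)⟩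
  have h3 := huniq (f 3) ⟨f.map_rel_iff.2 (by rw [diamond_adj]; decide),
    f.map_rel_iff.2 (by rw [diamond_adj]; decide)⟩
  exact absurd (f.injective (h2.trans h3.symm)) (by decide)

lemma fwd_cliqueFree {V : Type*} (G : SimpleGraph V)
    (h : ∀ u v : V, G.Adj u v → ∃! w, G.Adj u w ∧ G.Adj v w) :
    G.CliqueFree 4 := by
  rw [SimpleGraph.cliqueFree_iff]
  constructor
  intro f
  obtain ⟨w, _, huniq⟩ := h (f 0) (f 1) (f.toHom.map_adj (by simp))
  have h2 := huniq (f 2) ⟨f.toHom.map_adj (by simp), f.toHom.map_adj (by simp)⟩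
  have h3 := huniq (f 3) ⟨f.toHom.map_adj (by simp), f.toHom.map_adj (by simp)⟩
  exact absurd (f.injective (h2.trans h3.symm)) (by decide)

lemma fwd_no_star {V : Type*} [Fintype V] (p : ℕ) (G : SimpleGraph V) [DecidableRel G.Adj]
    (hreg : G.IsRegularOfDegree (2 * p))
    (h : ∀ u v : V, G.Adj u v → ∃! w, G.Adj u w ∧ G.Adj v w) :
    ¬ Nonempty (completeBipartiteGraph (Fin 1) (Fin (p + 1)) ↪g G) := by
  classical
  rintro ⟨f⟩
  set u := f (Sum.inl 0) with hu
  have hadj : ∀ i : Fin (p+1), G.Adj u (f (Sum.inr i)) :=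
    fun i => f.map_rel_iff.2 (by simp)
  have hnadj : ∀ i j : Fin (p+1), ¬ G.Adj (f (Sum.inr i)) (f (Sum.inr j)) := by
    intro i j hij
    have := f.map_rel_iff.1 hij
    simp at this
  choose m hm hm' using fun i => h u (f (Sum.inr i)) (hadj i)
  have vne : ∀ i, f (Sum.inr i) ≠ m i := fun i => ((hm i).2).ne
  have mne : ∀ i j, m i = m j → i = j := by
    intro i j hij
    have h1 : G.Adj u (m i) := (hm i).1
    obtain ⟨w, _, huniq⟩ := h u (m i) h1
    have e1 := huniq (f (Sum.inr i)) ⟨hadj i, (hm i).2.symm⟩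
    have e2 := huniq (f (Sum.inr j)) ⟨hadj j, hij ▸ (hm j).2.symm⟩
    exact Sum.inr.inj (f.injective (e1.trans e2.symm))
  have mnv : ∀ i j, m i ≠ f (Sum.inr j) := by
    intro i j hij
    by_cases hij' : i = j
    · subst hij'; exact vne i hij.symm
    · exact hnadj i j (hij ▸ (hm i).2)
  set P : Fin (p+1) → Finset V := fun i => {f (Sum.inr i), m i} with hP
  have hPcard : ∀ i, (P i).card = 2 := fun i => Finset.card_pair (vne i)
  have hPsub : ∀ i, P i ⊆ G.neighborFinset u := by
    intro i x hx
    rw [hP] at hx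
    simp only [Finset.mem_insert, Finset.mem_singleton] at hx
    rw [SimpleGraph.mem_neighborFinset]
    rcases hx with rfl | rfl
    · exact hadj i
    · exact (hm i).1
  have hdisj : ∀ i ∈ (Finset.univ : Finset (Fin (p+1))), ∀ j ∈ Finset.univ, i ≠ j →
      Disjoint (P i) (P j) := by
    intro i _ j _ hij
    rw [Finset.disjoint_left]
    intro x hxi hxj
    simp only [hP, Finset.mem_insert, Finset.mem_singleton] at hxi hxj
    rcases hxi with rfl | rfl <;> rcases hxj with h' | h'
    · exact hij (Sum.inr.inj (f.injective h'))
    · exact mnv j i h'.symm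
    · exact mnv i j h'
    · exact hij (mne i j h')
  have hcard : (Finset.univ.biUnion P).card = 2 * (p + 1) := by
    rw [Finset.card_biUnion hdisj]
    simp [hPcard, Finset.sum_const, mul_comm]
  have hle : (Finset.univ.biUnion P).card ≤ (G.neighborFinset u).card :=
    Finset.card_le_card (Finset.biUnion_subset.2 fun i _ => hPsub i)
  rw [hcard, SimpleGraph.card_neighborFinset_eq_degree, hreg u] at hle
  omega

lemma bwd_exists {V : Type*} [Fintype V] (p : ℕ) (G : SimpleGraph V) [DecidableRel G.Adj]
    (hreg : G.IsRegularOfDegree (2 * p))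
    (hd : ¬ Nonempty (Diamond ↪g G)) (hk : G.CliqueFree 4)
    (hs : ¬ Nonempty (completeBipartiteGraph (Fin 1) (Fin (p + 1)) ↪g G))
    {u v : V} (huv : G.Adj u v) : ∃ w, G.Adj u w ∧ G.Adj v w := by
  classical
  by_contra hno
  push_neg at hno
  set S := G.neighborFinset u with hS
  have hScard : S.card = 2 * p := by rw [hS, G.card_neighborFinset_eq_degree, hreg u]
  have hmemS : ∀ a, a ∈ S ↔ G.Adj u a := fun a => G.mem_neighborFinset u a
  have muq : ∀ a b c : V, G.Adj u a → G.Adj u b → G.Adj u c → G.Adj a b → G.Adj a c → b = c :=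
    fun a b c h1 h2 h3 h4 h5 => matching_unique G hd hk h1 h2 h3 h4 h5
  set T := S.filter (fun a => ∀ b ∈ S, ¬ G.Adj a b) with hT
  set M := S.filter (fun a => ¬ ∀ b ∈ S, ¬ G.Adj a b) with hM
  have hMmem : ∀ a, a ∈ M ↔ a ∈ S ∧ ∃ b ∈ S, G.Adj a b := by
    intro a; rw [hM, Finset.mem_filter]; push_neg; rfl
  have hvT : v ∈ T := by
    rw [hT, Finset.mem_filter]
    exact ⟨(hmemS v).2 huv, fun b hb hadj => hno b ((hmemS b).1 hb) hadj⟩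
  -- the partner function
  set σ : V → V := fun a => if h : ∃ b ∈ S, G.Adj a b then h.choose else a with hσdef
  have hσ : ∀ a ∈ M, σ a ∈ S ∧ G.Adj a (σ a) := by
    intro a ha
    obtain ⟨-, hex⟩ := (hMmem a).1 ha
    rw [hσdef]; simp only [dif_pos hex]
    exact ⟨hex.choose_spec.1, hex.choose_spec.2⟩
  have hσM : ∀ a ∈ M, σ a ∈ M := by
    intro a ha
    exact (hMmem _).2 ⟨(hσ a ha).1, a, (hMmem a).1 ha |>.1, (hσ a ha).2.symm⟩
  have hσuniq : ∀ a ∈ M, ∀ b ∈ S, G.Adj a b → b = σ a := by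
    intro a ha b hb hadj
    exact muq a b (σ a) ((hmemS a).1 ((hMmem a).1 ha).1) ((hmemS b).1 hb)
      ((hmemS _).1 (hσ a ha).1) hadj (hσ a ha).2
  have hσσ : ∀ a ∈ M, σ (σ a) = a := by
    intro a ha
    exact (hσuniq (σ a) (hσM a ha) a ((hMmem a).1 ha).1 (hσ a ha).2.symm).symm
  have hσne : ∀ a ∈ M, σ a ≠ a := fun a ha => fun h => G.irrefl (h ▸ (hσ a ha).2)
  -- split M by an ordering
  obtain ⟨e⟩ : Nonempty (V ≃ Fin (Fintype.card V)) := ⟨Fintype.equivFin V⟩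
  set M1 := M.filter (fun a => e a < e (σ a)) with hM1
  set M2 := M.filter (fun a => ¬ e a < e (σ a)) with hM2
  have hM2mem : ∀ a, a ∈ M2 ↔ a ∈ M ∧ e (σ a) < e a := by
    intro a
    rw [hM2, Finset.mem_filter]
    constructor
    · rintro ⟨ha, h⟩
      refine ⟨ha, lt_of_le_of_ne (not_lt.1 h) ?_⟩
      exact fun hc => hσne a ha (e.injective hc)
    · rintro ⟨ha, h⟩; exact ⟨ha, not_lt.2 h.le⟩
  have hMsplit : M1.card + M2.card = M.card := Finset.card_filter_add_card_filter_not _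
  have hM12 : M1.card = M2.card := by
    refine Finset.card_bij (fun a _ => σ a) ?_ ?_ ?_
    · intro a ha
      rw [hM1, Finset.mem_filter] at ha
      rw [hM2mem]
      exact ⟨hσM a ha.1, by rw [hσσ a ha.1]; exact ha.2⟩
    · intro a ha b hb hab
      rw [hM1, Finset.mem_filter] at ha hb
      have := congrArg σ hab
      rwa [hσσ a ha.1, hσσ b hb.1] at this
    · intro b hb
      rw [hM2mem] at hb
      refine ⟨σ b, ?_, hσσ b hb.1⟩
      rw [hM1, Finset.mem_filter]
      exact ⟨hσM b hb.1, by rw [hσσ b hb.1]; exact hb.2⟩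
  have hSsplit : T.card + M.card = S.card := Finset.card_filter_add_card_filter_not _
  have hTpos : 1 ≤ T.card := Finset.card_pos.2 ⟨v, hvT⟩
  -- the independent set
  set I := T ∪ M1 with hI
  have hTM : Disjoint T M := by
    rw [hT, hM]; exact Finset.disjoint_filter_filter_not S S _
  have hIcard : I.card = T.card + M1.card := by
    rw [hI, Finset.card_union_of_disjoint]
    exact hTM.mono_right (Finset.filter_subset _ _)
  have hIS : I ⊆ S := by
    rw [hI]
    exact Finset.union_subset (Finset.filter_subset _ _)
      ((Finset.filter_subset _ _).trans (Finset.filter_subset _ _))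
  have hIbig : p + 1 ≤ I.card := by omega
  have hind : ∀ a ∈ I, ∀ b ∈ I, ¬ G.Adj a b := by
    intro a ha b hb hadj
    rw [hI, Finset.mem_union] at ha hb
    rcases ha with ha | ha
    · rw [hT, Finset.mem_filter] at ha
      exact ha.2 b (hIS (by rw [hI, Finset.mem_union]; exact hb)) hadj
    · rcases hb with hb | hb
      · rw [hT, Finset.mem_filter] at hb
        exact hb.2 a (hIS (by rw [hI, Finset.mem_union]; exact Or.inr ha)) hadj.symm
      · rw [hM1, Finset.mem_filter] at ha hb
        have e1 : b = σ a := hσuniq a ha.1 b ((hMmem b).1 hb.1).1 hadj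
        have e2 : a = σ b := hσuniq b hb.1 a ((hMmem a).1 ha.1).1 hadj.symm
        have l1 := ha.2; have l2 := hb.2
        rw [← e1] at l1; rw [← e2] at l2
        exact absurd l1 (not_lt.2 l2.le)
  -- extract p+1 vertices and build the star embedding
  obtain ⟨J, hJI, hJcard⟩ := Finset.exists_subset_card_eq hIbig
  let g : Fin (p + 1) → V := fun i => ((J.equivFinOfCardEq hJcard).symm i : V)
  have hgJ : ∀ i, g i ∈ J := fun i => ((J.equivFinOfCardEq hJcard).symm i).2
  have hgI : ∀ i, g i ∈ I := fun i => hJI (hgJ i)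
  have hgadj : ∀ i, G.Adj u (g i) := fun i => (hmemS _).1 (hIS (hgI i))
  have hginj : Function.Injective g := by
    intro i j hij
    have := (J.equivFinOfCardEq hJcard).symm.injective (Subtype.ext hij)
    exact this
  refine hs ⟨⟨⟨Sum.elim (fun _ => u) g, ?_⟩, ?_⟩⟩
  · rintro (a | a) (b | b) hab
    · exact congrArg Sum.inl (Subsingleton.elim a b)
    · exact absurd (hab : u = g b) (hgadj b).ne
    · exact absurd ((hab : g a = u)).symm (hgadj a).ne
    · exact congrArg Sum.inr (hginj hab)
  · intro a b
    show G.Adj (Sum.elim (fun _ => u) g a) (Sum.elim (fun _ => u) g b) ↔ _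
    rcases a with a | a <;> rcases b with b | b
    · simp
    · simp [hgadj b]
    · simp [(hgadj a).symm]
    · simpa using hind _ (hgI a) _ (hgI b)

theorem stmt17 {V : Type*} [Fintype V] (p : ℕ) (hp : 2 ≤ p)
    (G : SimpleGraph V) [DecidableRel G.Adj]
    (hconn : G.Connected) (hreg : G.IsRegularOfDegree (2 * p)) :
    (∀ u v : V, G.Adj u v → ∃! w, G.Adj u w ∧ G.Adj v w) ↔
      (¬ Nonempty (Diamond ↪g G) ∧ G.CliqueFree 4 ∧
        ¬ Nonempty (completeBipartiteGraph (Fin 1) (Fin (p + 1)) ↪g G)) := by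
  constructor
  · intro h
    exact ⟨fwd_no_diamond G h, fwd_cliqueFree G h, fwd_no_star p G hreg h⟩
  · rintro ⟨hd, hk, hs⟩ u v huv
    obtain ⟨w, hw1, hw2⟩ := bwd_exists p G hreg hd hk hs huv
    refine ⟨w, ⟨hw1, hw2⟩, ?_⟩
    rintro y ⟨hy1, hy2⟩
    exact matching_unique G hd hk huv.symm hy2 hw2 hy1 hw1
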